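/- Let Ψ := (W_{i,j}(z))_{i,j≥0}, the one-sided matrix over ℂ((z^{−1})) of generating series of unrestricted lattice paths with nonnegative endpoints. Then Ψ is a two-sided inverse of zI − K: for all i,j ≥ 0, Σ_{r≥0} (zI−K)_{i,r}·W_{r,j}(z) = δ_{i,j} and Σ_{r≥0} W_{i,r}(z)·(zI−K)_{r,j} = δ_{i,j} (each sum has only finitely many nonzero terms since zI−K is banded). In particular, for i,j ≥ 0, W_{i,j}(z) coincides with the (i,j) entry ζ_{i,j}(z) of the inverse of zI−K. -/

import Mathlib

open scoped BigOperators
open Finset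

noncomputable section

/-- The field `ℂ((z⁻¹))`, realized as Laurent series in the variable `t = z⁻¹`. -/
abbrev LS : Type := LaurentSeries ℂ

/-- The element `z` of `ℂ((z⁻¹))` (i.e. `t⁻¹`). -/
def zLS : LS := HahnSeries.single (-1 : ℤ) (1 : ℂ)

/-- Constant (scalar) Laurent series. -/
def CLS (c : ℂ) : LS := HahnSeries.C c

/-- The generating series `Σ_{n ≥ 0} c n · z^{-n-1}` in `ℂ((z⁻¹))`. -/
def gen (c : ℕ → ℂ) : LS :=
  HahnSeries.single (1 : ℤ) (1 : ℂ) * (HahnSeries.ofPowerSeries ℤ ℂ) (PowerSeries.mk c)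

/-- Weight of a step of displacement `s` starting at height `h`:
`a_h^{(s)}` if `s ≥ 0`, and `a_{h+s}^{(s)}` if `s < 0`.  (Here `a k n = aₙ⁽ᵏ⁾`.) -/
def stepW (a : ℤ → ℤ → ℂ) (h s : ℤ) : ℂ := if 0 ≤ s then a s h else a s (h + s)

/-- Extend a finite step sequence by zero. -/
def ext {n : ℕ} (s : Fin n → ℤ) : ℕ → ℤ := fun t => if h : t < n then s ⟨t, h⟩ else 0

/-- Height after `k` steps, starting at height `i`. -/
def hgt (i : ℤ) (σ : ℕ → ℤ) (k : ℕ) : ℤ := i + ∑ t ∈ Finset.range k, σ t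

/-- Weight of the lattice path of length `n` starting at height `i` with steps `σ`. -/
def wgt (a : ℤ → ℤ → ℂ) (n : ℕ) (i : ℤ) (σ : ℕ → ℤ) : ℂ :=
  ∏ k ∈ Finset.range n, stepW a (hgt i σ k) (σ k)

/-- All admissible step sequences of length `n` (each step in `[-p, q]`). -/
def steps (p q n : ℕ) : Finset (Fin n → ℤ) :=
  Fintype.piFinset fun _ => Finset.Icc (-(p : ℤ)) (q : ℤ)

/-- `A_{[n,i,j]}`: weight polynomial of paths of length `n` from `(0,i)` to `(n,j)`
staying at height `≥ 0`. -/
def Apoly (p q : ℕ) (a : ℤ → ℤ → ℂ) (n : ℕ) (i j : ℤ) : ℂ :=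
  ∑ s ∈ steps p q n,
    if hgt i (ext s) n = j ∧ ∀ k ≤ n, 0 ≤ hgt i (ext s) k then wgt a n i (ext s) else 0

/-- `W_{[n,i,j]}`: weight polynomial of unrestricted paths of length `n` from `(0,i)` to `(n,j)`. -/
def Wpoly (p q : ℕ) (a : ℤ → ℤ → ℂ) (n : ℕ) (i j : ℤ) : ℂ :=
  ∑ s ∈ steps p q n, if hgt i (ext s) n = j then wgt a n i (ext s) else 0

/-- `V_{[n,i,j]}`: weight polynomial of paths of length `n` from `(0,i)` to `(n,j)`
staying at height `≤ -1`. -/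
def Vpoly (p q : ℕ) (a : ℤ → ℤ → ℂ) (n : ℕ) (i j : ℤ) : ℂ :=
  ∑ s ∈ steps p q n,
    if hgt i (ext s) n = j ∧ ∀ k ≤ n, hgt i (ext s) k ≤ -1 then wgt a n i (ext s) else 0

/-- `A_{[ℓ,i,j,N]}`: weight polynomial of paths of length `ℓ` from `(0,i)` to `(ℓ,j)`
with all heights in `{0, …, N-1}`. -/
def Aboxpoly (p q : ℕ) (a : ℤ → ℤ → ℂ) (N ℓ : ℕ) (i j : ℤ) : ℂ :=
  ∑ s ∈ steps p q ℓ,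
    if hgt i (ext s) ℓ = j ∧ ∀ k ≤ ℓ, 0 ≤ hgt i (ext s) k ∧ hgt i (ext s) k ≤ (N : ℤ) - 1
    then wgt a ℓ i (ext s) else 0

/-- The generating series `A_{i,j}(z)`. -/
def Aser (p q : ℕ) (a : ℤ → ℤ → ℂ) (i j : ℤ) : LS := gen fun n => Apoly p q a n i j

/-- The generating series `W_{i,j}(z)`. -/
def Wser (p q : ℕ) (a : ℤ → ℤ → ℂ) (i j : ℤ) : LS := gen fun n => Wpoly p q a n i j

/-- The generating series `V_{i,j}(z)`. -/
def Vser (p q : ℕ) (a : ℤ → ℤ → ℂ) (i j : ℤ) : LS := gen fun n => Vpoly p q a n i j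


/-- The one-sided banded matrix `H`: `h_{i,j} = a_{min(i,j)}^{(j-i)}` when `-p ≤ j-i ≤ q`. -/
def Hmat (p q : ℕ) (a : ℤ → ℤ → ℂ) (i j : ℕ) : ℂ :=
  if -(p : ℤ) ≤ (j : ℤ) - (i : ℤ) ∧ (j : ℤ) - (i : ℤ) ≤ (q : ℤ) then
    a ((j : ℤ) - (i : ℤ)) (min (i : ℤ) (j : ℤ)) else 0

/-- Entrywise power of a one-sided matrix whose rows are supported on `[0, i + B]`:
`(M^n)_{i,j}`. -/
def onePow (M : ℕ → ℕ → ℂ) (B : ℕ) : ℕ → ℕ → ℕ → ℂ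
  | 0, i, j => if i = j then 1 else 0
  | n + 1, i, j => ∑ r ∈ Finset.range (i + B + 1), M i r * onePow M B n r j

/-- The banded matrix `K` over `ℂ((z⁻¹))`: it agrees with `H` except in the top-left `p × q`
corner, where `K_{i,j} = h_{i,j} + Σ_{l=1}^{p-i} Σ_{m=1}^{q-j} a_{-l}^{(-(l+i))} a_{-m}^{(m+j)}
V_{-l,-m}(z)`. -/
def Kmat (p q : ℕ) (a : ℤ → ℤ → ℂ) (i j : ℕ) : LS :=
  CLS (Hmat p q a i j) +
    ∑ l ∈ Finset.Icc 1 (p - i), ∑ m ∈ Finset.Icc 1 (q - j),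
      CLS (a (-((l : ℤ) + (i : ℤ))) (-(l : ℤ))) * CLS (a ((m : ℤ) + (j : ℤ)) (-(m : ℤ))) *
        Vser p q a (-(l : ℤ)) (-(m : ℤ))

/-! ### Auxiliary development -/

section Aux

/-- Generalized restricted weight polynomial. -/
def SP (P : ℤ → Prop) [DecidablePred P] (p q : ℕ) (a : ℤ → ℤ → ℂ) (n : ℕ) (i j : ℤ) : ℂ :=
  ∑ s ∈ steps p q n,
    if hgt i (_root_.ext s) n = j ∧ ∀ k ≤ n, P (hgt i (_root_.ext s) k)
    then wgt a n i (_root_.ext s) else 0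

lemma hgt_zero (i : ℤ) (σ : ℕ → ℤ) : hgt i σ 0 = i := by simp [hgt]

lemma ext_cons_zero {n : ℕ} (k : ℤ) (t : Fin n → ℤ) : _root_.ext (Fin.cons k t) 0 = k := by
  simp [_root_.ext]

lemma ext_cons_succ {n : ℕ} (k : ℤ) (t : Fin n → ℤ) (u : ℕ) :
    _root_.ext (Fin.cons k t) (u + 1) = _root_.ext t u := by
  unfold _root_.ext
  by_cases h : u < n
  · rw [dif_pos (by omega : u + 1 < n + 1), dif_pos h]
    exact Fin.cons_succ (α := fun _ => ℤ) k t ⟨u, h⟩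
  · rw [dif_neg (by omega), dif_neg h]

lemma hgt_cons {n : ℕ} (i k : ℤ) (t : Fin n → ℤ) (u : ℕ) :
    hgt i (_root_.ext (Fin.cons k t)) (u + 1) = hgt (i + k) (_root_.ext t) u := by
  unfold hgt
  rw [Finset.sum_range_succ']
  simp only [ext_cons_succ, ext_cons_zero]
  ring

lemma wgt_cons {n : ℕ} (a : ℤ → ℤ → ℂ) (i k : ℤ) (t : Fin n → ℤ) :
    wgt a (n + 1) i (_root_.ext (Fin.cons k t))
      = stepW a i k * wgt a n (i + k) (_root_.ext t) := by
  unfold wgt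
  rw [Finset.prod_range_succ', hgt_zero, ext_cons_zero, mul_comm]
  congr 1
  exact Finset.prod_congr rfl fun u _ => by rw [hgt_cons, ext_cons_succ]

lemma steps_zero (p q : ℕ) : steps p q 0 = {![]} := by
  apply Finset.eq_singleton_iff_unique_mem.mpr
  refine ⟨?_, fun s _ => Subsingleton.elim _ _⟩
  rw [steps, Fintype.mem_piFinset]
  exact fun a => a.elim0

lemma SP_zero (P : ℤ → Prop) [DecidablePred P] (p q : ℕ) (a : ℤ → ℤ → ℂ) (i j : ℤ) :
    SP P p q a 0 i j = if i = j ∧ P i then 1 else 0 := by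
  rw [SP, steps_zero, Finset.sum_singleton]
  have h2 : wgt a 0 i (_root_.ext (![] : Fin 0 → ℤ)) = 1 := by simp [wgt]
  rw [h2, hgt_zero]
  congr 1
  simp only [eq_iff_iff]
  constructor
  · rintro ⟨h, hP⟩; exact ⟨h, by simpa [hgt_zero] using hP 0 le_rfl⟩
  · rintro ⟨h, hP⟩
    exact ⟨h, fun k hk => by simp only [Nat.le_zero] at hk; subst hk; simpa [hgt_zero]⟩

lemma SP_start_vanish (P : ℤ → Prop) [DecidablePred P] (p q : ℕ) (a : ℤ → ℤ → ℂ) (n : ℕ)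
    (i j : ℤ) (hPi : ¬ P i) : SP P p q a n i j = 0 := by
  rw [SP]
  refine Finset.sum_eq_zero fun s _ => if_neg ?_
  rintro ⟨-, h2⟩
  exact hPi (by simpa [hgt_zero] using h2 0 (Nat.zero_le n))

lemma SP_end_vanish (P : ℤ → Prop) [DecidablePred P] (p q : ℕ) (a : ℤ → ℤ → ℂ) (n : ℕ)
    (i j : ℤ) (hPj : ¬ P j) : SP P p q a n i j = 0 := by
  rw [SP]
  refine Finset.sum_eq_zero fun s _ => if_neg ?_
  rintro ⟨h1, h2⟩
  exact hPj (h1 ▸ h2 n le_rfl)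

lemma SP_succ_left (P : ℤ → Prop) [DecidablePred P] (p q : ℕ) (a : ℤ → ℤ → ℂ) (n : ℕ)
    (i j : ℤ) (hPi : P i) :
    SP P p q a (n + 1) i j
      = ∑ k ∈ Finset.Icc (-(p : ℤ)) (q : ℤ), stepW a i k * SP P p q a n (i + k) j := by
  simp only [SP, Finset.mul_sum]
  rw [← Finset.sum_product']
  refine (Finset.sum_nbij' (fun s => (s 0, Fin.tail s)) (fun x => Fin.cons x.1 x.2)
    ?_ ?_ ?_ ?_ ?_).symm.symm
  · intro s hs
    rw [steps, Fintype.mem_piFinset] at hs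
    rw [Finset.mem_product]
    exact ⟨hs 0, by rw [steps, Fintype.mem_piFinset]; exact fun u => hs u.succ⟩
  · intro x hx
    rw [Finset.mem_product] at hx
    rw [steps, Fintype.mem_piFinset]
    intro u
    refine Fin.cases ?_ ?_ u
    · exact hx.1
    · intro v
      have : Fin.cons (α := fun _ => ℤ) x.1 x.2 v.succ ∈ Finset.Icc (-(p:ℤ)) (q:ℤ) := by
        rw [Fin.cons_succ]
        have h2 := hx.2
        rw [steps, Fintype.mem_piFinset] at h2
        exact h2 v
      exact this
  · intro s _; exact Fin.cons_self_tail s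
  · intro x _; simp [Fin.tail_cons]
  · intro s hs
    have hcons : Fin.cons (s 0) (Fin.tail s) = s := Fin.cons_self_tail s
    rw [← hcons]
    simp only [Fin.tail_cons]
    set k := s 0
    set t := Fin.tail s
    rw [wgt_cons]
    have hiff : (hgt i (_root_.ext (Fin.cons k t)) (n+1) = j
        ∧ ∀ u ≤ n + 1, P (hgt i (_root_.ext (Fin.cons k t)) u))
        ↔ (hgt (i+k) (_root_.ext t) n = j ∧ ∀ u ≤ n, P (hgt (i+k) (_root_.ext t) u)) := by
      constructor
      · rintro ⟨h1, h2⟩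
        exact ⟨by rw [← hgt_cons]; exact h1,
          fun u hu => by rw [← hgt_cons]; exact h2 (u+1) (by omega)⟩
      · rintro ⟨h1, h2⟩
        refine ⟨by rw [hgt_cons]; exact h1, fun u hu => ?_⟩
        cases u with
        | zero => simpa [hgt_zero]
        | succ v => rw [hgt_cons]; exact h2 v (by omega)
    rw [if_congr hiff rfl rfl, Fin.cons_zero, mul_ite, mul_zero]

lemma ext_snoc_lt {n : ℕ} (t : Fin n → ℤ) (k : ℤ) (u : ℕ) (h : u < n) :
    _root_.ext (Fin.snoc t k) u = _root_.ext t u := by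
  unfold _root_.ext
  rw [dif_pos (by omega : u < n + 1), dif_pos h]
  have : (⟨u, by omega⟩ : Fin (n+1)) = Fin.castSucc ⟨u, h⟩ := rfl
  rw [this]
  exact Fin.snoc_castSucc (α := fun _ => ℤ) k t ⟨u, h⟩

lemma ext_snoc_last {n : ℕ} (t : Fin n → ℤ) (k : ℤ) :
    _root_.ext (Fin.snoc t k) n = k := by
  unfold _root_.ext
  rw [dif_pos (by omega : n < n + 1)]
  have : (⟨n, by omega⟩ : Fin (n+1)) = Fin.last n := rfl
  rw [this]
  exact Fin.snoc_last (α := fun _ => ℤ) k t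

lemma hgt_snoc {n : ℕ} (i k : ℤ) (t : Fin n → ℤ) (u : ℕ) (hu : u ≤ n) :
    hgt i (_root_.ext (Fin.snoc t k)) u = hgt i (_root_.ext t) u := by
  unfold hgt
  congr 1
  exact Finset.sum_congr rfl fun v hv =>
    ext_snoc_lt t k v (by rw [Finset.mem_range] at hv; omega)

lemma hgt_snoc_last {n : ℕ} (i k : ℤ) (t : Fin n → ℤ) :
    hgt i (_root_.ext (Fin.snoc t k)) (n + 1) = hgt i (_root_.ext t) n + k := by
  unfold hgt
  rw [Finset.sum_range_succ, ext_snoc_last]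
  rw [Finset.sum_congr rfl fun v hv =>
    ext_snoc_lt t k v (by rw [Finset.mem_range] at hv; omega)]
  ring

lemma wgt_snoc {n : ℕ} (a : ℤ → ℤ → ℂ) (i k : ℤ) (t : Fin n → ℤ) :
    wgt a (n + 1) i (_root_.ext (Fin.snoc t k))
      = wgt a n i (_root_.ext t) * stepW a (hgt i (_root_.ext t) n) k := by
  unfold wgt
  rw [Finset.prod_range_succ, ext_snoc_last, hgt_snoc i k t n le_rfl]
  congr 1
  exact Finset.prod_congr rfl fun u hu => by
    rw [Finset.mem_range] at hu
    rw [hgt_snoc i k t u (by omega), ext_snoc_lt t k u hu]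

lemma SP_succ_right (P : ℤ → Prop) [DecidablePred P] (p q : ℕ) (a : ℤ → ℤ → ℂ) (n : ℕ)
    (i j : ℤ) (hPj : P j) :
    SP P p q a (n + 1) i j
      = ∑ k ∈ Finset.Icc (-(p : ℤ)) (q : ℤ), SP P p q a n i (j - k) * stepW a (j - k) k := by
  simp only [SP, Finset.sum_mul]
  rw [← Finset.sum_product']
  refine (Finset.sum_nbij' (fun s => ((s (Fin.last n) : ℤ), (Fin.init s : Fin n → ℤ)))
    (fun x => Fin.snoc x.2 x.1) ?_ ?_ ?_ ?_ ?_).symm.symm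
  · intro s hs
    rw [steps, Fintype.mem_piFinset] at hs
    rw [Finset.mem_product]
    refine ⟨hs _, ?_⟩
    rw [steps, Fintype.mem_piFinset]
    exact fun u => hs u.castSucc
  · intro x hx
    rw [Finset.mem_product] at hx
    rw [steps, Fintype.mem_piFinset]
    intro u
    refine Fin.lastCases ?_ ?_ u
    · have : Fin.snoc (α := fun _ => ℤ) x.2 x.1 (Fin.last n) ∈ Finset.Icc (-(p:ℤ)) (q:ℤ) := by
        rw [Fin.snoc_last]; exact hx.1
      exact this
    · intro v
      have : Fin.snoc (α := fun _ => ℤ) x.2 x.1 v.castSucc ∈ Finset.Icc (-(p:ℤ)) (q:ℤ) := by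
        rw [Fin.snoc_castSucc]
        have h2 := hx.2
        rw [steps, Fintype.mem_piFinset] at h2
        exact h2 v
      exact this
  · intro s _; exact Fin.snoc_init_self s
  · intro x _; simp [Fin.init_snoc, Fin.snoc_last]
  · intro s hs
    have hsnoc : Fin.snoc (Fin.init s) (s (Fin.last n)) = s := Fin.snoc_init_self s
    rw [← hsnoc]
    simp only [Fin.init_snoc, Fin.snoc_last]
    set k := s (Fin.last n)
    set t := Fin.init s
    rw [wgt_snoc]
    have hiff : (hgt i (_root_.ext (Fin.snoc t k)) (n+1) = j
        ∧ ∀ u ≤ n + 1, P (hgt i (_root_.ext (Fin.snoc t k)) u))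
        ↔ (hgt i (_root_.ext t) n = j - k ∧ ∀ u ≤ n, P (hgt i (_root_.ext t) u)) := by
      constructor
      · rintro ⟨h1, h2⟩
        rw [hgt_snoc_last] at h1
        exact ⟨by omega, fun u hu => by rw [← hgt_snoc i k t u hu]; exact h2 u (by omega)⟩
      · rintro ⟨h1, h2⟩
        refine ⟨by rw [hgt_snoc_last, h1]; ring, fun u hu => ?_⟩
        rcases Nat.lt_or_ge u (n+1) with h | h
        · rw [hgt_snoc i k t u (by omega)]; exact h2 u (by omega)
        · have : u = n + 1 := by omega
          subst this
          rw [hgt_snoc_last, h1, sub_add_cancel]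
          exact hPj
    rw [if_congr hiff rfl rfl, ite_mul, zero_mul]
    rcases Decidable.em (hgt i (_root_.ext t) n = j - k ∧ ∀ u ≤ n, P (hgt i (_root_.ext t) u))
      with h | h
    · rw [if_pos h, if_pos h, h.1]
    · rw [if_neg h, if_neg h]

/-! ### Bridges to `Wpoly` and `Vpoly` -/

lemma Wpoly_SP (p q : ℕ) (a : ℤ → ℤ → ℂ) (n : ℕ) (i j : ℤ) :
    Wpoly p q a n i j = SP (fun _ => True) p q a n i j := by
  rw [Wpoly, SP]
  exact Finset.sum_congr rfl fun s _ => by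
    apply if_congr _ rfl rfl
    simp

lemma Vpoly_SP (p q : ℕ) (a : ℤ → ℤ → ℂ) (n : ℕ) (i j : ℤ) :
    Vpoly p q a n i j = SP (fun x => x ≤ -1) p q a n i j := by
  rw [Vpoly, SP]

lemma Wpoly_zero (p q : ℕ) (a : ℤ → ℤ → ℂ) (i j : ℤ) :
    Wpoly p q a 0 i j = if i = j then 1 else 0 := by
  rw [Wpoly_SP, SP_zero]
  simp

lemma Vpoly_zero (p q : ℕ) (a : ℤ → ℤ → ℂ) (i j : ℤ) (hi : i ≤ -1) :
    Vpoly p q a 0 i j = if i = j then 1 else 0 := by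
  rw [Vpoly_SP, SP_zero]
  simp [hi]

lemma Wpoly_succ_left (p q : ℕ) (a : ℤ → ℤ → ℂ) (n : ℕ) (i j : ℤ) :
    Wpoly p q a (n + 1) i j
      = ∑ k ∈ Finset.Icc (-(p : ℤ)) (q : ℤ), stepW a i k * Wpoly p q a n (i + k) j := by
  rw [Wpoly_SP, SP_succ_left _ _ _ _ _ _ _ trivial]
  exact Finset.sum_congr rfl fun k _ => by rw [Wpoly_SP]

lemma Vpoly_succ_left (p q : ℕ) (a : ℤ → ℤ → ℂ) (n : ℕ) (i j : ℤ) (hi : i ≤ -1) :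
    Vpoly p q a (n + 1) i j
      = ∑ k ∈ Finset.Icc (-(p : ℤ)) (q : ℤ), stepW a i k * Vpoly p q a n (i + k) j := by
  rw [Vpoly_SP, SP_succ_left (fun x => x ≤ -1) p q a n i j hi]
  exact Finset.sum_congr rfl fun k _ => by rw [Vpoly_SP]

lemma Wpoly_succ_right (p q : ℕ) (a : ℤ → ℤ → ℂ) (n : ℕ) (i j : ℤ) :
    Wpoly p q a (n + 1) i j
      = ∑ k ∈ Finset.Icc (-(p : ℤ)) (q : ℤ), Wpoly p q a n i (j - k) * stepW a (j - k) k := by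
  rw [Wpoly_SP, SP_succ_right _ _ _ _ _ _ _ trivial]
  exact Finset.sum_congr rfl fun k _ => by rw [Wpoly_SP]

lemma Vpoly_succ_right (p q : ℕ) (a : ℤ → ℤ → ℂ) (n : ℕ) (i j : ℤ) (hj : j ≤ -1) :
    Vpoly p q a (n + 1) i j
      = ∑ k ∈ Finset.Icc (-(p : ℤ)) (q : ℤ), Vpoly p q a n i (j - k) * stepW a (j - k) k := by
  rw [Vpoly_SP, SP_succ_right (fun x => x ≤ -1) p q a n i j hj]
  exact Finset.sum_congr rfl fun k _ => by rw [Vpoly_SP]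

lemma Vpoly_start_vanish (p q : ℕ) (a : ℤ → ℤ → ℂ) (n : ℕ) (i j : ℤ) (hi : ¬ i ≤ -1) :
    Vpoly p q a n i j = 0 := by
  rw [Vpoly_SP]; exact SP_start_vanish _ _ _ _ _ _ _ hi

lemma Vpoly_end_vanish (p q : ℕ) (a : ℤ → ℤ → ℂ) (n : ℕ) (i j : ℤ) (hj : ¬ j ≤ -1) :
    Vpoly p q a n i j = 0 := by
  rw [Vpoly_SP]; exact SP_end_vanish _ _ _ _ _ _ _ hj

/-! ### Series helper lemmas -/

lemma CLS_mul (c d : ℂ) : CLS c * CLS d = CLS (c * d) := by simp [CLS, ← map_mul]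
lemma CLS_one : CLS 1 = 1 := by simp [CLS]
lemma CLS_zero : CLS 0 = 0 := by simp [CLS]

lemma gen_congr {c d : ℕ → ℂ} (h : ∀ n, c n = d n) : gen c = gen d := by
  have : c = d := funext h
  rw [this]

lemma gen_add (c d : ℕ → ℂ) : gen (fun n => c n + d n) = gen c + gen d := by
  have : PowerSeries.mk (fun n => c n + d n) = PowerSeries.mk c + PowerSeries.mk d := by
    ext n; simp [PowerSeries.coeff_mk]
  simp [gen, this, map_add, mul_add]

lemma gen_sum {α : Type*} (s : Finset α) (c : α → ℕ → ℂ) :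
    gen (fun n => ∑ x ∈ s, c x n) = ∑ x ∈ s, gen (c x) := by
  classical
  induction s using Finset.induction_on with
  | empty =>
    have : PowerSeries.mk (fun _ : ℕ => (0:ℂ)) = 0 := by ext n; simp [PowerSeries.coeff_mk]
    simp [gen, this]
  | insert x s' hx ih =>
    rw [Finset.sum_insert hx, ← ih, ← gen_add]
    exact gen_congr fun n => by rw [Finset.sum_insert hx]

lemma CLS_mul_gen (r : ℂ) (c : ℕ → ℂ) : CLS r * gen c = gen (fun n => r * c n) := by
  have h : PowerSeries.mk (fun n => r * c n) = PowerSeries.C r * PowerSeries.mk c := by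
    ext n; simp [PowerSeries.coeff_mk]
  rw [gen, gen, h, map_mul, HahnSeries.ofPowerSeries_C, CLS]; ring

lemma gen_mul_gen (c d : ℕ → ℂ) :
    gen c * gen d = gen (fun n => ∑ k ∈ Finset.range n, c k * d (n - 1 - k)) := by
  have h : PowerSeries.mk (fun n => ∑ k ∈ Finset.range n, c k * d (n - 1 - k))
      = PowerSeries.X * (PowerSeries.mk c * PowerSeries.mk d) := by
    ext n
    cases n with
    | zero => simp [PowerSeries.coeff_mk]
    | succ m =>
      rw [PowerSeries.coeff_succ_X_mul, PowerSeries.coeff_mul, PowerSeries.coeff_mk,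
        Finset.Nat.sum_antidiagonal_eq_sum_range_succ_mk]
      exact Finset.sum_congr rfl fun k _ => by simp [PowerSeries.coeff_mk]
  rw [gen, gen, gen, h, map_mul, map_mul, HahnSeries.ofPowerSeries_X]
  ring

lemma zLS_mul_gen (c : ℕ → ℂ) : zLS * gen c = CLS (c 0) + gen (fun n => c (n+1)) := by
  have h : PowerSeries.mk c
      = PowerSeries.C (c 0) + PowerSeries.X * PowerSeries.mk (fun n => c (n+1)) := by
    ext n
    cases n with
    | zero => simp [PowerSeries.coeff_mk]
    | succ m => simp [PowerSeries.coeff_mk, PowerSeries.coeff_succ_X_mul]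
  rw [zLS, gen, ← mul_assoc, HahnSeries.single_mul_single, one_mul]
  norm_num
  rw [h, map_add, map_mul, HahnSeries.ofPowerSeries_C, HahnSeries.ofPowerSeries_X, gen, CLS]

lemma Bco_left (p q : ℕ) (a : ℤ → ℤ → ℂ) :
    ∀ n : ℕ, ∀ i j : ℤ, i ≤ -1 → 0 ≤ j →
    Wpoly p q a n i j
      = ∑ m ∈ Finset.Icc 1 q, ∑ r ∈ Finset.range (q + 1 - m), ∑ n1 ∈ Finset.range n,
          Vpoly p q a n1 i (-(m:ℤ)) * a ((m:ℤ) + (r:ℤ)) (-(m:ℤ))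
            * Wpoly p q a (n - 1 - n1) (r:ℤ) j := by
  intro n
  induction n with
  | zero =>
    intro i j hi hj
    rw [Wpoly_zero, if_neg (by omega)]
    simp
  | succ n IH =>
    intro i j hi hj
    rw [Wpoly_succ_left]
    -- split LHS
    have hsplit : ∀ k : ℤ, stepW a i k * Wpoly p q a n (i + k) j
        = (if 0 ≤ i + k then stepW a i k * Wpoly p q a n (i + k) j else 0)
          + (if i + k ≤ -1 then stepW a i k * Wpoly p q a n (i + k) j else 0) := by
      intro k
      by_cases h : 0 ≤ i + k
      · rw [if_pos h, if_neg (by omega), add_zero]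
      · rw [if_neg h, if_pos (by omega), zero_add]
    rw [Finset.sum_congr rfl fun k _ => hsplit k, Finset.sum_add_distrib]
    -- split RHS
    have hrhs : ∀ m ∈ Finset.Icc 1 q, ∀ r ∈ Finset.range (q + 1 - m),
        (∑ n1 ∈ Finset.range (n+1),
          Vpoly p q a n1 i (-(m:ℤ)) * a ((m:ℤ) + (r:ℤ)) (-(m:ℤ))
            * Wpoly p q a (n + 1 - 1 - n1) (r:ℤ) j)
        = (∑ n1 ∈ Finset.range n,
            Vpoly p q a (n1+1) i (-(m:ℤ)) * a ((m:ℤ) + (r:ℤ)) (-(m:ℤ))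
              * Wpoly p q a (n - 1 - n1) (r:ℤ) j)
          + Vpoly p q a 0 i (-(m:ℤ)) * a ((m:ℤ) + (r:ℤ)) (-(m:ℤ))
              * Wpoly p q a n (r:ℤ) j := by
      intro m _ r _
      rw [Finset.sum_range_succ']
      congr 1
      · exact Finset.sum_congr rfl fun n1 hn1 => by
          rw [Finset.mem_range] at hn1
          congr 2
          omega
    rw [Finset.sum_congr rfl fun m hm => Finset.sum_congr rfl fun r hr =>
      hrhs m hm r hr]
    rw [Finset.sum_congr rfl fun m (_ : m ∈ Finset.Icc 1 q) =>
      Finset.sum_add_distrib, Finset.sum_add_distrib]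
    rw [add_comm]
    congr 1
    -- Main (negative) part
    · have hterm : ∀ m ∈ Finset.Icc 1 q, ∀ r ∈ Finset.range (q + 1 - m),
          ∀ n1 ∈ Finset.range n,
          Vpoly p q a (n1+1) i (-(m:ℤ)) * a ((m:ℤ) + (r:ℤ)) (-(m:ℤ))
              * Wpoly p q a (n - 1 - n1) (r:ℤ) j
          = ∑ k ∈ Finset.Icc (-(p:ℤ)) (q:ℤ),
              stepW a i k * (Vpoly p q a n1 (i+k) (-(m:ℤ)) * a ((m:ℤ) + (r:ℤ)) (-(m:ℤ))
                * Wpoly p q a (n - 1 - n1) (r:ℤ) j) := by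
        intro m _ r _ n1 _
        rw [Vpoly_succ_left p q a n1 i (-(m:ℤ)) hi, Finset.sum_mul, Finset.sum_mul]
        exact Finset.sum_congr rfl fun k _ => by ring
      rw [Finset.sum_congr rfl fun m hm => Finset.sum_congr rfl fun r hr =>
        Finset.sum_congr rfl fun n1 hn1 => hterm m hm r hr n1 hn1]
      rw [Finset.sum_congr rfl fun m _ => Finset.sum_congr rfl fun r _ =>
        Finset.sum_comm (s := Finset.range n) (t := Finset.Icc (-(p:ℤ)) (q:ℤ))]
      rw [Finset.sum_congr rfl fun m _ =>
        Finset.sum_comm (s := Finset.range (q+1-m)) (t := Finset.Icc (-(p:ℤ)) (q:ℤ))]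
      rw [Finset.sum_comm (s := Finset.Icc 1 q) (t := Finset.Icc (-(p:ℤ)) (q:ℤ))]
      refine (Finset.sum_congr rfl fun k hk => ?_).symm
      have hpull : ∑ m ∈ Finset.Icc 1 q, ∑ r ∈ Finset.range (q + 1 - m),
          ∑ n1 ∈ Finset.range n,
            stepW a i k * (Vpoly p q a n1 (i+k) (-(m:ℤ)) * a ((m:ℤ) + (r:ℤ)) (-(m:ℤ))
              * Wpoly p q a (n - 1 - n1) (r:ℤ) j)
          = stepW a i k * ∑ m ∈ Finset.Icc 1 q, ∑ r ∈ Finset.range (q + 1 - m),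
            ∑ n1 ∈ Finset.range n,
              Vpoly p q a n1 (i+k) (-(m:ℤ)) * a ((m:ℤ) + (r:ℤ)) (-(m:ℤ))
                * Wpoly p q a (n - 1 - n1) (r:ℤ) j := by
        simp only [← Finset.mul_sum]
      rw [hpull]
      by_cases h : i + k ≤ -1
      · rw [if_pos h, ← IH (i+k) j h hj]
      · rw [if_neg h]
        have : ∑ m ∈ Finset.Icc 1 q, ∑ r ∈ Finset.range (q + 1 - m),
            ∑ n1 ∈ Finset.range n,
              Vpoly p q a n1 (i+k) (-(m:ℤ)) * a ((m:ℤ) + (r:ℤ)) (-(m:ℤ))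
                * Wpoly p q a (n - 1 - n1) (r:ℤ) j = 0 := by
          refine Finset.sum_eq_zero fun m _ => Finset.sum_eq_zero fun r _ =>
            Finset.sum_eq_zero fun n1 _ => ?_
          rw [Vpoly_start_vanish p q a n1 (i+k) (-(m:ℤ)) h, zero_mul, zero_mul]
        rw [this, mul_zero]
    -- Delta (positive) part
    · have hdel : ∀ m ∈ Finset.Icc 1 q,
          (∑ r ∈ Finset.range (q + 1 - m),
            Vpoly p q a 0 i (-(m:ℤ)) * a ((m:ℤ) + (r:ℤ)) (-(m:ℤ)) * Wpoly p q a n (r:ℤ) j)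
          = if m = (-i).toNat then
              (∑ r ∈ Finset.range (q + 1 - m),
                a ((m:ℤ) + (r:ℤ)) (-(m:ℤ)) * Wpoly p q a n (r:ℤ) j)
            else 0 := by
        intro m _
        rw [Vpoly_zero p q a i (-(m:ℤ)) hi]
        have : (i = -(m:ℤ)) ↔ (m = (-i).toNat) := by omega
        by_cases h : m = (-i).toNat
        · rw [if_pos (this.mpr h), if_pos h]
          exact Finset.sum_congr rfl fun r _ => by rw [one_mul]
        · rw [if_neg (fun hh => h (this.mp hh)), if_neg h]
          exact Finset.sum_eq_zero fun r _ => by rw [zero_mul, zero_mul]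
      rw [Finset.sum_congr rfl hdel, Finset.sum_ite_eq' (Finset.Icc 1 q) ((-i).toNat)]
      set l0 := (-i).toNat with hl0def
      have hl0 : 1 ≤ l0 := by omega
      have hil : i = -(l0:ℤ) := by omega
      -- collapse the `if` into the (possibly empty) range
      have hcollapse : (if l0 ∈ Finset.Icc 1 q then
            (∑ r ∈ Finset.range (q + 1 - l0),
              a ((l0:ℤ) + (r:ℤ)) (-(l0:ℤ)) * Wpoly p q a n (r:ℤ) j)
          else 0)
          = ∑ r ∈ Finset.range (q + 1 - l0),
              a ((l0:ℤ) + (r:ℤ)) (-(l0:ℤ)) * Wpoly p q a n (r:ℤ) j := by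
        by_cases h : l0 ∈ Finset.Icc 1 q
        · rw [if_pos h]
        · rw [if_neg h]
          rw [Finset.mem_Icc] at h
          have : q + 1 - l0 = 0 := by omega
          rw [this]
          simp
      rw [hcollapse]
      -- reindex the positive part
      rw [← Finset.sum_filter]
      refine Finset.sum_nbij' (fun k => (i + k).toNat) (fun r => (r:ℤ) - i) ?_ ?_ ?_ ?_ ?_
      · intro k hk
        simp only [Finset.mem_filter, Finset.mem_Icc] at hk
        beta_reduce
        rw [Finset.mem_range]
        omega
      · intro r hr
        rw [Finset.mem_range] at hr
        beta_reduce
        simp only [Finset.mem_filter, Finset.mem_Icc]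
        omega
      · intro k hk
        simp only [Finset.mem_filter, Finset.mem_Icc] at hk
        beta_reduce
        omega
      · intro r hr
        rw [Finset.mem_range] at hr
        beta_reduce
        omega
      · intro k hk
        simp only [Finset.mem_filter, Finset.mem_Icc] at hk
        beta_reduce
        have h1 : (l0:ℤ) + (((i+k).toNat : ℕ) : ℤ) = k := by omega
        have h2 : (((i+k).toNat : ℕ) : ℤ) = i + k := by omega
        rw [h1, h2, ← hil, stepW, if_pos (by omega : (0:ℤ) ≤ k)]

lemma Bco_right (p q : ℕ) (a : ℤ → ℤ → ℂ) :
    ∀ n : ℕ, ∀ i j : ℤ, 0 ≤ i → j ≤ -1 →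
    Wpoly p q a n i j
      = ∑ l ∈ Finset.Icc 1 p, ∑ r ∈ Finset.range (p + 1 - l), ∑ n1 ∈ Finset.range n,
          Wpoly p q a n1 i (r:ℤ) * a (-((l:ℤ) + (r:ℤ))) (-(l:ℤ))
            * Vpoly p q a (n - 1 - n1) (-(l:ℤ)) j := by
  intro n
  induction n with
  | zero =>
    intro i j hi hj
    rw [Wpoly_zero, if_neg (by omega)]
    simp
  | succ n IH =>
    intro i j hi hj
    rw [Wpoly_succ_right]
    have hsplit : ∀ k : ℤ, Wpoly p q a n i (j - k) * stepW a (j - k) k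
        = (if 0 ≤ j - k then Wpoly p q a n i (j - k) * stepW a (j - k) k else 0)
          + (if j - k ≤ -1 then Wpoly p q a n i (j - k) * stepW a (j - k) k else 0) := by
      intro k
      by_cases h : 0 ≤ j - k
      · rw [if_pos h, if_neg (by omega), add_zero]
      · rw [if_neg h, if_pos (by omega), zero_add]
    rw [Finset.sum_congr rfl fun k _ => hsplit k, Finset.sum_add_distrib]
    have hrhs : ∀ l ∈ Finset.Icc 1 p, ∀ r ∈ Finset.range (p + 1 - l),
        (∑ n1 ∈ Finset.range (n+1),
          Wpoly p q a n1 i (r:ℤ) * a (-((l:ℤ) + (r:ℤ))) (-(l:ℤ))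
            * Vpoly p q a (n + 1 - 1 - n1) (-(l:ℤ)) j)
        = (∑ n1 ∈ Finset.range n,
            Wpoly p q a n1 i (r:ℤ) * a (-((l:ℤ) + (r:ℤ))) (-(l:ℤ))
              * Vpoly p q a ((n - 1 - n1) + 1) (-(l:ℤ)) j)
          + Wpoly p q a n i (r:ℤ) * a (-((l:ℤ) + (r:ℤ))) (-(l:ℤ))
              * Vpoly p q a 0 (-(l:ℤ)) j := by
      intro l _ r _
      rw [Finset.sum_range_succ]
      congr 1
      · exact Finset.sum_congr rfl fun n1 hn1 => by
          rw [Finset.mem_range] at hn1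
          congr 2
          omega
      · congr 2
        omega
    rw [Finset.sum_congr rfl fun l hl => Finset.sum_congr rfl fun r hr =>
      hrhs l hl r hr]
    rw [Finset.sum_congr rfl fun l (_ : l ∈ Finset.Icc 1 p) =>
      Finset.sum_add_distrib, Finset.sum_add_distrib]
    rw [add_comm]
    congr 1
    -- Main (negative-end) part
    · have hterm : ∀ l ∈ Finset.Icc 1 p, ∀ r ∈ Finset.range (p + 1 - l),
          ∀ n1 ∈ Finset.range n,
          Wpoly p q a n1 i (r:ℤ) * a (-((l:ℤ) + (r:ℤ))) (-(l:ℤ))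
              * Vpoly p q a ((n - 1 - n1) + 1) (-(l:ℤ)) j
          = ∑ k ∈ Finset.Icc (-(p:ℤ)) (q:ℤ),
              (Wpoly p q a n1 i (r:ℤ) * a (-((l:ℤ) + (r:ℤ))) (-(l:ℤ))
                * Vpoly p q a (n - 1 - n1) (-(l:ℤ)) (j - k)) * stepW a (j - k) k := by
        intro l _ r _ n1 _
        rw [Vpoly_succ_right p q a (n - 1 - n1) (-(l:ℤ)) j hj, Finset.mul_sum]
        exact Finset.sum_congr rfl fun k _ => by ring
      rw [Finset.sum_congr rfl fun l hl => Finset.sum_congr rfl fun r hr =>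
        Finset.sum_congr rfl fun n1 hn1 => hterm l hl r hr n1 hn1]
      rw [Finset.sum_congr rfl fun l _ => Finset.sum_congr rfl fun r _ =>
        Finset.sum_comm (s := Finset.range n) (t := Finset.Icc (-(p:ℤ)) (q:ℤ))]
      rw [Finset.sum_congr rfl fun l _ =>
        Finset.sum_comm (s := Finset.range (p+1-l)) (t := Finset.Icc (-(p:ℤ)) (q:ℤ))]
      rw [Finset.sum_comm (s := Finset.Icc 1 p) (t := Finset.Icc (-(p:ℤ)) (q:ℤ))]
      refine (Finset.sum_congr rfl fun k hk => ?_).symm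
      have hpull : ∑ l ∈ Finset.Icc 1 p, ∑ r ∈ Finset.range (p + 1 - l),
          ∑ n1 ∈ Finset.range n,
            (Wpoly p q a n1 i (r:ℤ) * a (-((l:ℤ) + (r:ℤ))) (-(l:ℤ))
              * Vpoly p q a (n - 1 - n1) (-(l:ℤ)) (j - k)) * stepW a (j - k) k
          = (∑ l ∈ Finset.Icc 1 p, ∑ r ∈ Finset.range (p + 1 - l),
            ∑ n1 ∈ Finset.range n,
              Wpoly p q a n1 i (r:ℤ) * a (-((l:ℤ) + (r:ℤ))) (-(l:ℤ))
                * Vpoly p q a (n - 1 - n1) (-(l:ℤ)) (j - k)) * stepW a (j - k) k := by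
        simp only [Finset.sum_mul]
      rw [hpull]
      by_cases h : j - k ≤ -1
      · rw [if_pos h, ← IH i (j - k) hi h]
      · rw [if_neg h]
        have : ∑ l ∈ Finset.Icc 1 p, ∑ r ∈ Finset.range (p + 1 - l),
            ∑ n1 ∈ Finset.range n,
              Wpoly p q a n1 i (r:ℤ) * a (-((l:ℤ) + (r:ℤ))) (-(l:ℤ))
                * Vpoly p q a (n - 1 - n1) (-(l:ℤ)) (j - k) = 0 := by
          refine Finset.sum_eq_zero fun l _ => Finset.sum_eq_zero fun r _ =>
            Finset.sum_eq_zero fun n1 _ => ?_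
          rw [Vpoly_end_vanish p q a (n - 1 - n1) (-(l:ℤ)) (j - k) h, mul_zero]
        rw [this, zero_mul]
    -- Delta part
    · have hdel : ∀ l ∈ Finset.Icc 1 p,
          (∑ r ∈ Finset.range (p + 1 - l),
            Wpoly p q a n i (r:ℤ) * a (-((l:ℤ) + (r:ℤ))) (-(l:ℤ)) * Vpoly p q a 0 (-(l:ℤ)) j)
          = if l = (-j).toNat then
              (∑ r ∈ Finset.range (p + 1 - l),
                Wpoly p q a n i (r:ℤ) * a (-((l:ℤ) + (r:ℤ))) (-(l:ℤ)))
            else 0 := by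
        intro l hl
        rw [Finset.mem_Icc] at hl
        rw [Vpoly_zero p q a (-(l:ℤ)) j (by omega)]
        have hiff : ((-(l:ℤ) = j)) ↔ (l = (-j).toNat) := by omega
        by_cases h : l = (-j).toNat
        · rw [if_pos (hiff.mpr h), if_pos h]
          exact Finset.sum_congr rfl fun r _ => by rw [mul_one]
        · rw [if_neg (fun hh => h (hiff.mp hh)), if_neg h]
          exact Finset.sum_eq_zero fun r _ => by rw [mul_zero]
      rw [Finset.sum_congr rfl hdel, Finset.sum_ite_eq' (Finset.Icc 1 p) ((-j).toNat)]
      set m0 := (-j).toNat with hm0def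
      have hm0 : 1 ≤ m0 := by omega
      have hjm : j = -(m0:ℤ) := by omega
      have hcollapse : (if m0 ∈ Finset.Icc 1 p then
            (∑ r ∈ Finset.range (p + 1 - m0),
              Wpoly p q a n i (r:ℤ) * a (-((m0:ℤ) + (r:ℤ))) (-(m0:ℤ)))
          else 0)
          = ∑ r ∈ Finset.range (p + 1 - m0),
              Wpoly p q a n i (r:ℤ) * a (-((m0:ℤ) + (r:ℤ))) (-(m0:ℤ)) := by
        by_cases h : m0 ∈ Finset.Icc 1 p
        · rw [if_pos h]
        · rw [if_neg h]
          rw [Finset.mem_Icc] at h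
          have : p + 1 - m0 = 0 := by omega
          rw [this]
          simp
      rw [hcollapse]
      rw [← Finset.sum_filter]
      refine Finset.sum_nbij' (fun k => (j - k).toNat) (fun r => j - (r:ℤ)) ?_ ?_ ?_ ?_ ?_
      · intro k hk
        simp only [Finset.mem_filter, Finset.mem_Icc] at hk
        beta_reduce
        rw [Finset.mem_range]
        omega
      · intro r hr
        rw [Finset.mem_range] at hr
        beta_reduce
        simp only [Finset.mem_filter, Finset.mem_Icc]
        omega
      · intro k hk
        simp only [Finset.mem_filter, Finset.mem_Icc] at hk
        beta_reduce
        omega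
      · intro r hr
        rw [Finset.mem_range] at hr
        beta_reduce
        omega
      · intro k hk
        simp only [Finset.mem_filter, Finset.mem_Icc] at hk
        beta_reduce
        have h1 : -((m0:ℤ) + (((j - k).toNat : ℕ) : ℤ)) = k := by omega
        have h2 : (((j - k).toNat : ℕ) : ℤ) = j - k := by omega
        rw [h1, h2, ← hjm, stepW, if_neg (by omega : ¬ (0:ℤ) ≤ k), sub_add_cancel]

lemma Wser_dec_left (p q : ℕ) (a : ℤ → ℤ → ℂ) (i j : ℤ) (hi : i ≤ -1) (hj : 0 ≤ j) :
    Wser p q a i j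
      = ∑ m ∈ Finset.Icc 1 q, ∑ r ∈ Finset.range (q + 1 - m),
          CLS (a ((m:ℤ) + (r:ℤ)) (-(m:ℤ))) * (Vser p q a i (-(m:ℤ)) * Wser p q a (r:ℤ) j) := by
  have h1 : ∀ m ∈ Finset.Icc 1 q, ∀ r ∈ Finset.range (q+1-m),
      CLS (a ((m:ℤ) + (r:ℤ)) (-(m:ℤ))) * (Vser p q a i (-(m:ℤ)) * Wser p q a (r:ℤ) j)
        = gen (fun n => a ((m:ℤ) + (r:ℤ)) (-(m:ℤ)) * ∑ n1 ∈ Finset.range n,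
            Vpoly p q a n1 i (-(m:ℤ)) * Wpoly p q a (n-1-n1) (r:ℤ) j) := by
    intro m _ r _
    rw [Vser, Wser, gen_mul_gen, CLS_mul_gen]
  rw [Finset.sum_congr rfl fun m hm => Finset.sum_congr rfl fun r hr => h1 m hm r hr]
  rw [Finset.sum_congr rfl fun m (_ : m ∈ Finset.Icc 1 q) =>
    (gen_sum (Finset.range (q+1-m)) _).symm, (gen_sum (Finset.Icc 1 q) _).symm]
  rw [Wser]
  refine gen_congr fun n => ?_
  rw [Bco_left p q a n i j hi hj]
  refine Finset.sum_congr rfl fun m _ => Finset.sum_congr rfl fun r _ => ?_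
  rw [Finset.mul_sum]
  exact Finset.sum_congr rfl fun n1 _ => by ring

lemma Wser_dec_right (p q : ℕ) (a : ℤ → ℤ → ℂ) (i j : ℤ) (hi : 0 ≤ i) (hj : j ≤ -1) :
    Wser p q a i j
      = ∑ l ∈ Finset.Icc 1 p, ∑ r ∈ Finset.range (p + 1 - l),
          CLS (a (-((l:ℤ) + (r:ℤ))) (-(l:ℤ))) * (Wser p q a i (r:ℤ) * Vser p q a (-(l:ℤ)) j) := by
  have h1 : ∀ l ∈ Finset.Icc 1 p, ∀ r ∈ Finset.range (p+1-l),
      CLS (a (-((l:ℤ) + (r:ℤ))) (-(l:ℤ))) * (Wser p q a i (r:ℤ) * Vser p q a (-(l:ℤ)) j)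
        = gen (fun n => a (-((l:ℤ) + (r:ℤ))) (-(l:ℤ)) * ∑ n1 ∈ Finset.range n,
            Wpoly p q a n1 i (r:ℤ) * Vpoly p q a (n-1-n1) (-(l:ℤ)) j) := by
    intro l _ r _
    rw [Vser, Wser, gen_mul_gen, CLS_mul_gen]
  rw [Finset.sum_congr rfl fun l hl => Finset.sum_congr rfl fun r hr => h1 l hl r hr]
  rw [Finset.sum_congr rfl fun l (_ : l ∈ Finset.Icc 1 p) =>
    (gen_sum (Finset.range (p+1-l)) _).symm, (gen_sum (Finset.Icc 1 p) _).symm]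
  rw [Wser]
  refine gen_congr fun n => ?_
  rw [Bco_right p q a n i j hi hj]
  refine Finset.sum_congr rfl fun l _ => Finset.sum_congr rfl fun r _ => ?_
  rw [Finset.mul_sum]
  exact Finset.sum_congr rfl fun n1 _ => by ring

lemma sum_swap_tri (N q : ℕ) (hNq : q ≤ N) (f : ℕ → ℕ → LS) :
    ∑ r ∈ Finset.range N, ∑ m ∈ Finset.Icc 1 (q - r), f m r
      = ∑ m ∈ Finset.Icc 1 q, ∑ r ∈ Finset.range (q + 1 - m), f m r := by
  rw [← Finset.sum_subset (Finset.range_subset_range.mpr hNq) (fun r _ hr => ?_)]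
  · have h2 : ∀ r ∈ Finset.range q, (∑ m ∈ Finset.Icc 1 (q - r), f m r)
        = ∑ m ∈ Finset.Icc 1 q, if m ≤ q - r then f m r else 0 := by
      intro r _
      rw [Finset.sum_ite, Finset.sum_const_zero, add_zero]
      apply Finset.sum_congr _ fun m _ => rfl
      exact Finset.ext fun x => by
        simp only [Finset.mem_filter, Finset.mem_Icc]
        omega
    rw [Finset.sum_congr rfl h2, Finset.sum_comm]
    refine Finset.sum_congr rfl fun m hm => ?_
    rw [Finset.mem_Icc] at hm
    rw [Finset.sum_ite, Finset.sum_const_zero, add_zero]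
    apply Finset.sum_congr _ fun r _ => rfl
    exact Finset.ext fun x => by
      simp only [Finset.mem_filter, Finset.mem_range]
      omega
  · rw [Finset.mem_range] at hr
    rw [show q - r = 0 by omega]
    simp

lemma left_id (p q : ℕ) (a : ℤ → ℤ → ℂ) (i j : ℕ) (N : ℕ) (hN : i + q < N) :
    ∑ r ∈ Finset.range N,
        ((if i = r then zLS else 0) - Kmat p q a i r) * Wser p q a (r : ℤ) (j : ℤ)
      = if i = j then 1 else 0 := by
  simp only [sub_mul, ite_mul, zero_mul]
  rw [Finset.sum_sub_distrib]
  rw [Finset.sum_ite_eq (Finset.range N) i (fun r => zLS * Wser p q a (r:ℤ) (j:ℤ)),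
    if_pos (Finset.mem_range.mpr (by omega))]
  rw [Wser, zLS_mul_gen]
  have hW0 : CLS (Wpoly p q a 0 (i:ℤ) (j:ℤ)) = if i = j then (1:LS) else 0 := by
    rw [Wpoly_zero]
    by_cases h : i = j
    · rw [if_pos (by exact_mod_cast h), if_pos h, CLS_one]
    · rw [if_neg (fun hh => h (by exact_mod_cast hh)), if_neg h, CLS_zero]
  rw [hW0]
  have hrec : gen (fun n => Wpoly p q a (n+1) (i:ℤ) (j:ℤ))
      = ∑ k ∈ Finset.Icc (-(p:ℤ)) (q:ℤ),
          CLS (stepW a (i:ℤ) k) * Wser p q a ((i:ℤ)+k) (j:ℤ) := by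
    rw [gen_congr fun n => Wpoly_succ_left p q a n (i:ℤ) (j:ℤ), gen_sum]
    exact Finset.sum_congr rfl fun k _ => by rw [Wser, CLS_mul_gen]
  rw [hrec]
  have hmain : ∑ k ∈ Finset.Icc (-(p:ℤ)) (q:ℤ),
        CLS (stepW a (i:ℤ) k) * Wser p q a ((i:ℤ)+k) (j:ℤ)
      = ∑ r ∈ Finset.range N, Kmat p q a i r * Wser p q a (r:ℤ) (j:ℤ) := by
    have hK : ∀ r ∈ Finset.range N, Kmat p q a i r * Wser p q a (r:ℤ) (j:ℤ)
        = CLS (Hmat p q a i r) * Wser p q a (r:ℤ) (j:ℤ)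
          + ∑ l ∈ Finset.Icc 1 (p - i), ∑ m ∈ Finset.Icc 1 (q - r),
              (CLS (a (-((l:ℤ) + (i:ℤ))) (-(l:ℤ))) * CLS (a ((m:ℤ) + (r:ℤ)) (-(m:ℤ)))
                * Vser p q a (-(l:ℤ)) (-(m:ℤ))) * Wser p q a (r:ℤ) (j:ℤ) := by
      intro r _
      rw [Kmat, add_mul, Finset.sum_mul]
      congr 1
      exact Finset.sum_congr rfl fun l _ => by rw [Finset.sum_mul]
    rw [Finset.sum_congr rfl hK, Finset.sum_add_distrib]
    have hsplit : ∀ k ∈ Finset.Icc (-(p:ℤ)) (q:ℤ),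
        CLS (stepW a (i:ℤ) k) * Wser p q a ((i:ℤ)+k) (j:ℤ)
        = (if 0 ≤ (i:ℤ) + k then CLS (stepW a (i:ℤ) k) * Wser p q a ((i:ℤ)+k) (j:ℤ) else 0)
          + (if (i:ℤ) + k ≤ -1 then CLS (stepW a (i:ℤ) k) * Wser p q a ((i:ℤ)+k) (j:ℤ) else 0) := by
      intro k _
      by_cases h : 0 ≤ (i:ℤ) + k
      · rw [if_pos h, if_neg (by omega), add_zero]
      · rw [if_neg h, if_pos (by omega), zero_add]
    rw [Finset.sum_congr rfl hsplit, Finset.sum_add_distrib]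
    congr 1
    -- positive part = banded H part
    · have hH : ∀ r ∈ Finset.range N, CLS (Hmat p q a i r) * Wser p q a (r:ℤ) (j:ℤ)
          = if (-(p:ℤ) ≤ (r:ℤ) - (i:ℤ) ∧ (r:ℤ) - (i:ℤ) ≤ (q:ℤ)) then
              CLS (a ((r:ℤ) - (i:ℤ)) (min (i:ℤ) (r:ℤ))) * Wser p q a (r:ℤ) (j:ℤ)
            else 0 := by
        intro r _
        rw [Hmat]
        split_ifs with h
        · rfl
        · rw [CLS_zero, zero_mul]
      rw [Finset.sum_congr rfl hH, ← Finset.sum_filter, ← Finset.sum_filter]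
      refine Finset.sum_nbij' (fun k => ((i:ℤ) + k).toNat) (fun r => (r:ℤ) - (i:ℤ))
        ?_ ?_ ?_ ?_ ?_
      · intro k hk
        simp only [Finset.mem_filter, Finset.mem_Icc] at hk
        beta_reduce
        simp only [Finset.mem_filter, Finset.mem_range]
        omega
      · intro r hr
        simp only [Finset.mem_filter, Finset.mem_range] at hr
        beta_reduce
        simp only [Finset.mem_filter, Finset.mem_Icc]
        omega
      · intro k hk
        simp only [Finset.mem_filter, Finset.mem_Icc] at hk
        beta_reduce
        omega
      · intro r hr
        simp only [Finset.mem_filter, Finset.mem_range] at hr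
        beta_reduce
        omega
      · intro k hk
        simp only [Finset.mem_filter, Finset.mem_Icc] at hk
        beta_reduce
        have h2 : ((((i:ℤ) + k).toNat : ℕ) : ℤ) = (i:ℤ) + k := by omega
        have h3 : ((i:ℤ) + k) - (i:ℤ) = k := by ring
        have hXY : stepW a (i:ℤ) k = a k (min (i:ℤ) ((i:ℤ)+k)) := by
          rw [stepW]
          split_ifs with hk0
          · rw [min_eq_left (by omega)]
          · rw [min_eq_right (by omega)]
        rw [h2, h3, hXY]
      -- negative part = corner correction part
    · have hcorr : ∑ r ∈ Finset.range N, ∑ l ∈ Finset.Icc 1 (p - i),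
            ∑ m ∈ Finset.Icc 1 (q - r),
              (CLS (a (-((l:ℤ) + (i:ℤ))) (-(l:ℤ))) * CLS (a ((m:ℤ) + (r:ℤ)) (-(m:ℤ)))
                * Vser p q a (-(l:ℤ)) (-(m:ℤ))) * Wser p q a (r:ℤ) (j:ℤ)
          = ∑ l ∈ Finset.Icc 1 (p - i), ∑ m ∈ Finset.Icc 1 q,
              ∑ r ∈ Finset.range (q + 1 - m),
              (CLS (a (-((l:ℤ) + (i:ℤ))) (-(l:ℤ))) * CLS (a ((m:ℤ) + (r:ℤ)) (-(m:ℤ)))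
                * Vser p q a (-(l:ℤ)) (-(m:ℤ))) * Wser p q a (r:ℤ) (j:ℤ) := by
        rw [Finset.sum_comm]
        exact Finset.sum_congr rfl fun l _ => sum_swap_tri N q (by omega) _
      rw [hcorr, ← Finset.sum_filter]
      refine Finset.sum_nbij' (fun k => (-((i:ℤ) + k)).toNat) (fun l => -(l:ℤ) - (i:ℤ))
        ?_ ?_ ?_ ?_ ?_
      · intro k hk
        simp only [Finset.mem_filter, Finset.mem_Icc] at hk
        beta_reduce
        simp only [Finset.mem_Icc]
        omega
      · intro l hl
        simp only [Finset.mem_Icc] at hl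
        beta_reduce
        simp only [Finset.mem_filter, Finset.mem_Icc]
        omega
      · intro k hk
        simp only [Finset.mem_filter, Finset.mem_Icc] at hk
        beta_reduce
        omega
      · intro l hl
        simp only [Finset.mem_Icc] at hl
        beta_reduce
        omega
      · intro k hk
        simp only [Finset.mem_filter, Finset.mem_Icc] at hk
        beta_reduce
        have h1 : -(((-((i:ℤ)+k)).toNat : ℤ)) = (i:ℤ) + k := by omega
        have h2 : -(((-((i:ℤ)+k)).toNat : ℤ) + (i:ℤ)) = k := by omega
        rw [h1, h2]
        rw [show stepW a (i:ℤ) k = a k ((i:ℤ)+k) by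
          rw [stepW, if_neg (by omega)]]
        rw [Wser_dec_left p q a ((i:ℤ)+k) (j:ℤ) (by omega) (by omega)]
        rw [Finset.mul_sum]
        refine Finset.sum_congr rfl fun m _ => ?_
        rw [Finset.mul_sum]
        refine Finset.sum_congr rfl fun r _ => ?_
        ring
  rw [hmain]
  exact add_sub_cancel_right _ _

lemma gen_mul_CLS (c : ℕ → ℂ) (r : ℂ) : gen c * CLS r = gen (fun n => c n * r) := by
  rw [mul_comm, CLS_mul_gen]
  exact gen_congr fun n => mul_comm _ _

lemma right_id (p q : ℕ) (a : ℤ → ℤ → ℂ) (i j : ℕ) (N : ℕ) (hN : j + p < N) :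
    ∑ r ∈ Finset.range N,
        Wser p q a (i : ℤ) (r : ℤ) * ((if r = j then zLS else 0) - Kmat p q a r j)
      = if i = j then 1 else 0 := by
  simp only [mul_sub, mul_ite, mul_zero]
  rw [Finset.sum_sub_distrib]
  rw [Finset.sum_ite_eq' (Finset.range N) j (fun r => Wser p q a (i:ℤ) (r:ℤ) * zLS),
    if_pos (Finset.mem_range.mpr (by omega))]
  rw [mul_comm (Wser p q a (i:ℤ) (j:ℤ)) zLS, Wser, zLS_mul_gen]
  have hW0 : CLS (Wpoly p q a 0 (i:ℤ) (j:ℤ)) = if i = j then (1:LS) else 0 := by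
    rw [Wpoly_zero]
    by_cases h : i = j
    · rw [if_pos (by exact_mod_cast h), if_pos h, CLS_one]
    · rw [if_neg (fun hh => h (by exact_mod_cast hh)), if_neg h, CLS_zero]
  rw [hW0]
  have hrec : gen (fun n => Wpoly p q a (n+1) (i:ℤ) (j:ℤ))
      = ∑ k ∈ Finset.Icc (-(p:ℤ)) (q:ℤ),
          Wser p q a (i:ℤ) ((j:ℤ)-k) * CLS (stepW a ((j:ℤ)-k) k) := by
    rw [gen_congr fun n => Wpoly_succ_right p q a n (i:ℤ) (j:ℤ), gen_sum]
    exact Finset.sum_congr rfl fun k _ => by rw [Wser, gen_mul_CLS]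
  rw [hrec]
  have hmain : ∑ k ∈ Finset.Icc (-(p:ℤ)) (q:ℤ),
        Wser p q a (i:ℤ) ((j:ℤ)-k) * CLS (stepW a ((j:ℤ)-k) k)
      = ∑ r ∈ Finset.range N, Wser p q a (i:ℤ) (r:ℤ) * Kmat p q a r j := by
    have hK : ∀ r ∈ Finset.range N, Wser p q a (i:ℤ) (r:ℤ) * Kmat p q a r j
        = Wser p q a (i:ℤ) (r:ℤ) * CLS (Hmat p q a r j)
          + ∑ l ∈ Finset.Icc 1 (p - r), ∑ m ∈ Finset.Icc 1 (q - j),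
              Wser p q a (i:ℤ) (r:ℤ) * (CLS (a (-((l:ℤ) + (r:ℤ))) (-(l:ℤ)))
                * CLS (a ((m:ℤ) + (j:ℤ)) (-(m:ℤ))) * Vser p q a (-(l:ℤ)) (-(m:ℤ))) := by
      intro r _
      rw [Kmat, mul_add, Finset.mul_sum]
      congr 1
      exact Finset.sum_congr rfl fun l _ => by rw [Finset.mul_sum]
    rw [Finset.sum_congr rfl hK, Finset.sum_add_distrib]
    have hsplit : ∀ k ∈ Finset.Icc (-(p:ℤ)) (q:ℤ),
        Wser p q a (i:ℤ) ((j:ℤ)-k) * CLS (stepW a ((j:ℤ)-k) k)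
        = (if 0 ≤ (j:ℤ) - k then Wser p q a (i:ℤ) ((j:ℤ)-k) * CLS (stepW a ((j:ℤ)-k) k) else 0)
          + (if (j:ℤ) - k ≤ -1 then Wser p q a (i:ℤ) ((j:ℤ)-k) * CLS (stepW a ((j:ℤ)-k) k) else 0) := by
      intro k _
      by_cases h : 0 ≤ (j:ℤ) - k
      · rw [if_pos h, if_neg (by omega), add_zero]
      · rw [if_neg h, if_pos (by omega), zero_add]
    rw [Finset.sum_congr rfl hsplit, Finset.sum_add_distrib]
    congr 1
    · have hH : ∀ r ∈ Finset.range N, Wser p q a (i:ℤ) (r:ℤ) * CLS (Hmat p q a r j)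
          = if (-(p:ℤ) ≤ (j:ℤ) - (r:ℤ) ∧ (j:ℤ) - (r:ℤ) ≤ (q:ℤ)) then
              Wser p q a (i:ℤ) (r:ℤ) * CLS (a ((j:ℤ) - (r:ℤ)) (min (r:ℤ) (j:ℤ)))
            else 0 := by
        intro r _
        rw [Hmat]
        split_ifs with h
        · rfl
        · rw [CLS_zero, mul_zero]
      rw [Finset.sum_congr rfl hH, ← Finset.sum_filter, ← Finset.sum_filter]
      refine Finset.sum_nbij' (fun k => ((j:ℤ) - k).toNat) (fun r => (j:ℤ) - (r:ℤ))
        ?_ ?_ ?_ ?_ ?_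
      · intro k hk
        simp only [Finset.mem_filter, Finset.mem_Icc] at hk
        beta_reduce
        simp only [Finset.mem_filter, Finset.mem_range]
        omega
      · intro r hr
        simp only [Finset.mem_filter, Finset.mem_range] at hr
        beta_reduce
        simp only [Finset.mem_filter, Finset.mem_Icc]
        omega
      · intro k hk
        simp only [Finset.mem_filter, Finset.mem_Icc] at hk
        beta_reduce
        omega
      · intro r hr
        simp only [Finset.mem_filter, Finset.mem_range] at hr
        beta_reduce
        omega
      · intro k hk
        simp only [Finset.mem_filter, Finset.mem_Icc] at hk
        beta_reduce
        have h2 : ((((j:ℤ) - k).toNat : ℕ) : ℤ) = (j:ℤ) - k := by omega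
        have h3 : ((j:ℤ)) - ((j:ℤ) - k) = k := by ring
        have hXY : stepW a ((j:ℤ)-k) k = a k (min ((j:ℤ)-k) (j:ℤ)) := by
          rw [stepW]
          split_ifs with hk0
          · rw [min_eq_left (by omega)]
          · rw [min_eq_right (by omega), sub_add_cancel]
        rw [h2, h3, hXY]
    · have hcorr : ∑ r ∈ Finset.range N, ∑ l ∈ Finset.Icc 1 (p - r),
            ∑ m ∈ Finset.Icc 1 (q - j),
              Wser p q a (i:ℤ) (r:ℤ) * (CLS (a (-((l:ℤ) + (r:ℤ))) (-(l:ℤ)))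
                * CLS (a ((m:ℤ) + (j:ℤ)) (-(m:ℤ))) * Vser p q a (-(l:ℤ)) (-(m:ℤ)))
          = ∑ m ∈ Finset.Icc 1 (q - j), ∑ l ∈ Finset.Icc 1 p,
              ∑ r ∈ Finset.range (p + 1 - l),
              Wser p q a (i:ℤ) (r:ℤ) * (CLS (a (-((l:ℤ) + (r:ℤ))) (-(l:ℤ)))
                * CLS (a ((m:ℤ) + (j:ℤ)) (-(m:ℤ))) * Vser p q a (-(l:ℤ)) (-(m:ℤ))) := by
        rw [sum_swap_tri N p (by omega)
          (fun l r => ∑ m ∈ Finset.Icc 1 (q - j),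
            Wser p q a (i:ℤ) (r:ℤ) * (CLS (a (-((l:ℤ) + (r:ℤ))) (-(l:ℤ)))
              * CLS (a ((m:ℤ) + (j:ℤ)) (-(m:ℤ))) * Vser p q a (-(l:ℤ)) (-(m:ℤ))))]
        rw [Finset.sum_congr rfl fun l _ => Finset.sum_comm]
        rw [Finset.sum_comm]
      rw [hcorr, ← Finset.sum_filter]
      refine Finset.sum_nbij' (fun k => (k - (j:ℤ)).toNat) (fun m => (j:ℤ) + (m:ℤ))
        ?_ ?_ ?_ ?_ ?_
      · intro k hk
        simp only [Finset.mem_filter, Finset.mem_Icc] at hk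
        beta_reduce
        simp only [Finset.mem_Icc]
        omega
      · intro m hm
        simp only [Finset.mem_Icc] at hm
        beta_reduce
        simp only [Finset.mem_filter, Finset.mem_Icc]
        omega
      · intro k hk
        simp only [Finset.mem_filter, Finset.mem_Icc] at hk
        beta_reduce
        omega
      · intro m hm
        simp only [Finset.mem_Icc] at hm
        beta_reduce
        omega
      · intro k hk
        simp only [Finset.mem_filter, Finset.mem_Icc] at hk
        beta_reduce
        have h1 : -(((k - (j:ℤ)).toNat : ℤ)) = (j:ℤ) - k := by omega
        have h2 : ((k - (j:ℤ)).toNat : ℤ) + (j:ℤ) = k := by omega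
        rw [h1, h2]
        rw [show stepW a ((j:ℤ)-k) k = a k ((j:ℤ)-k) from by rw [stepW, if_pos (by omega)]]
        rw [Wser_dec_right p q a (i:ℤ) ((j:ℤ)-k) (by omega) (by omega)]
        rw [Finset.sum_mul]
        refine Finset.sum_congr rfl fun l _ => ?_
        rw [Finset.sum_mul]
        refine Finset.sum_congr rfl fun r _ => ?_
        ring
  rw [hmain]
  exact add_sub_cancel_right _ _

end Aux


/-- **Theorem 5.1**: the matrix `Ψ = (W_{i,j}(z))_{i,j ≥ 0}` is a two-sided inverse of the
banded matrix `zI - K` (all the sums below are complete: they include every index at which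
the corresponding entry of `zI - K` can be nonzero).  In particular `W_{i,j}(z) = ζ_{i,j}(z)`,
the `(i,j)` entry of `(zI - K)⁻¹`. -/
theorem W_series_inverse_of_zI_minus_K
    (p q : ℕ) (hp : 1 ≤ p) (hq : 1 ≤ q) (a : ℤ → ℤ → ℂ) (i j : ℕ) :
    (∀ N : ℕ, i + q < N →
      ∑ r ∈ Finset.range N,
          ((if i = r then zLS else 0) - Kmat p q a i r) * Wser p q a (r : ℤ) (j : ℤ) =
        if i = j then 1 else 0) ∧
    (∀ N : ℕ, j + p < N →
      ∑ r ∈ Finset.range N,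
          Wser p q a (i : ℤ) (r : ℤ) * ((if r = j then zLS else 0) - Kmat p q a r j) =
        if i = j then 1 else 0) := by
  exact ⟨fun N hN => left_id p q a i j N hN, fun N hN => right_id p q a i j N hN⟩
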